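/- Let K be ℝ or ℂ, let R = K[x,y,z,w₀,w₁,…]/I where I is the ideal generated by x·w₀ − z² and y·w_k − (k+1)·x·w_{k+1} (k ≥ 0). Then in the localization R[1/x], one has w_k = (1/k!)·y^k·z²·x^{−(k+1)} for every k ≥ 0, and R[1/x] is isomorphic to K[x,y,z][1/x]. -/

import Mathlib

set_option synthInstance.maxHeartbeats 1000000
set_option maxHeartbeats 1000000


open MvPolynomial

/-- The ideal I generated by x·w₀ − z² and y·w_k − (k+1)·x·w_{k+1} (k ≥ 0) in
K[x,y,z,w₀,w₁,…], with w_k = X (inl k), x = X (inr 0), y = X (inr 1), z = X (inr 2). -/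
noncomputable def rondIdeal (K : Type*) [CommRing K] : Ideal (MvPolynomial (ℕ ⊕ Fin 3) K) :=
  Ideal.span
    ({X (Sum.inr 0) * X (Sum.inl 0) - X (Sum.inr 2) ^ 2} ∪
      Set.range (fun k : ℕ =>
        X (Sum.inr 1) * X (Sum.inl k)
          - ((k : MvPolynomial (ℕ ⊕ Fin 3) K) + 1) * X (Sum.inr 0) * X (Sum.inl (k + 1))))

/-- The quotient ring R = K[x,y,z,w₀,w₁,…]/I. -/
noncomputable abbrev rondRing (K : Type*) [CommRing K] : Type _ :=
  MvPolynomial (ℕ ⊕ Fin 3) K ⧸ rondIdeal K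

/-- Image of a variable in R. -/
noncomputable def rv (K : Type*) [CommRing K] (i : ℕ ⊕ Fin 3) : rondRing K :=
  Ideal.Quotient.mk (rondIdeal K) (X i)

section Aux

variable (K : Type*) [CommRing K]

lemma rond_rel0 : rv K (Sum.inr 0) * rv K (Sum.inl 0) = rv K (Sum.inr 2) ^ 2 := by
  have h : (X (Sum.inr 0) * X (Sum.inl 0) - X (Sum.inr 2) ^ 2 : MvPolynomial (ℕ ⊕ Fin 3) K)
      ∈ rondIdeal K := Ideal.subset_span (Or.inl rfl)
  have h2 := (Ideal.Quotient.eq_zero_iff_mem).2 h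
  rw [map_sub, sub_eq_zero] at h2
  simpa [rv, map_mul, map_pow] using h2

lemma rond_relk (k : ℕ) :
    rv K (Sum.inr 1) * rv K (Sum.inl k)
      = ((k : rondRing K) + 1) * rv K (Sum.inr 0) * rv K (Sum.inl (k + 1)) := by
  have h : (X (Sum.inr 1) * X (Sum.inl k)
      - ((k : MvPolynomial (ℕ ⊕ Fin 3) K) + 1) * X (Sum.inr 0) * X (Sum.inl (k + 1)))
      ∈ rondIdeal K := Ideal.subset_span (Or.inr ⟨k, rfl⟩)
  have h2 := (Ideal.Quotient.eq_zero_iff_mem).2 h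
  rw [map_sub, sub_eq_zero] at h2
  simpa [rv, map_mul, map_add, map_one, map_natCast] using h2

end Aux

section Main

variable (K : Type*) [RCLike K]

lemma rond_key (k : ℕ) :
      (k.factorial : Localization.Away (rv K (Sum.inr 0)))
          * algebraMap (rondRing K) (Localization.Away (rv K (Sum.inr 0)))
              (rv K (Sum.inr 0)) ^ (k + 1)
          * algebraMap (rondRing K) (Localization.Away (rv K (Sum.inr 0)))
              (rv K (Sum.inl k))
        = algebraMap (rondRing K) (Localization.Away (rv K (Sum.inr 0)))
              (rv K (Sum.inr 1)) ^ k
          * algebraMap (rondRing K) (Localization.Away (rv K (Sum.inr 0)))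
              (rv K (Sum.inr 2)) ^ 2 := by
  set a := algebraMap (rondRing K) (Localization.Away (rv K (Sum.inr 0))) with ha
  induction k with
  | zero =>
      have h0 := congrArg a (rond_rel0 K)
      simp only [map_mul, map_pow] at h0
      have h3 := (Nat.cast_one (R := Localization.Away (rv K (Sum.inr 0))))
      simp only [Nat.factorial_zero, h3, one_mul, zero_add, pow_one, pow_zero]
      exact h0
  | succ k ih =>
      have hrel := congrArg a (rond_relk K k)
      simp only [map_mul, map_add, map_one, map_natCast] at hrel
      have hfac : (((k+1).factorial : ℕ) : Localization.Away (rv K (Sum.inr 0)))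
          = ((k : Localization.Away (rv K (Sum.inr 0))) + 1) * (k.factorial : ℕ) := by
        rw [Nat.factorial_succ]
        have h1 := Nat.cast_mul (α := Localization.Away (rv K (Sum.inr 0))) (k+1) (k.factorial)
        have h2 := Nat.cast_add (R := Localization.Away (rv K (Sum.inr 0))) (m := k) (n := 1)
        have h3 := (Nat.cast_one (R := Localization.Away (rv K (Sum.inr 0))))
        rw [h1, h2, h3]
      calc ((k+1).factorial : Localization.Away (rv K (Sum.inr 0)))
            * a (rv K (Sum.inr 0)) ^ (k + 1 + 1) * a (rv K (Sum.inl (k+1)))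
          = (k.factorial : _) * a (rv K (Sum.inr 0)) ^ (k+1)
              * (((k : Localization.Away (rv K (Sum.inr 0)))+1) * a (rv K (Sum.inr 0))
                * a (rv K (Sum.inl (k+1)))) := by
            rw [hfac]; ring
        _ = (k.factorial : _) * a (rv K (Sum.inr 0)) ^ (k+1)
              * (a (rv K (Sum.inr 1)) * a (rv K (Sum.inl k))) := by rw [← hrel]
        _ = a (rv K (Sum.inr 1)) * ((k.factorial : _) * a (rv K (Sum.inr 0)) ^ (k+1)
              * a (rv K (Sum.inl k))) := by ring
        _ = a (rv K (Sum.inr 1)) * (a (rv K (Sum.inr 1)) ^ k * a (rv K (Sum.inr 2)) ^ 2) := by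
            rw [ih]
        _ = a (rv K (Sum.inr 1)) ^ (k+1) * a (rv K (Sum.inr 2)) ^ 2 := by ring

-- abbreviations
local notation "Spoly" => MvPolynomial (Fin 3) K
local notation "Lring" => Localization.Away (X 0 : MvPolynomial (Fin 3) K)

/-- the target value of w_k -/
noncomputable def rondF : (ℕ ⊕ Fin 3) → Lring
  | Sum.inl k => algebraMap Spoly Lring (C ((k.factorial : K)⁻¹) * X 1 ^ k * X 2 ^ 2)
      * (IsLocalization.Away.invSelf (X 0 : Spoly)) ^ (k + 1)
  | Sum.inr i => algebraMap Spoly Lring (X i)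

noncomputable def rondPhi : MvPolynomial (ℕ ⊕ Fin 3) K →+* Lring :=
  eval₂Hom ((algebraMap Spoly Lring).comp (algebraMap K Spoly)) (rondF K)

lemma rond_gen0 : rondPhi K (X (Sum.inr 0) * X (Sum.inl 0) - X (Sum.inr 2) ^ 2) = 0 := by
  simp only [rondPhi, map_sub, map_mul, map_pow, eval₂Hom_X', rondF]
  have hxv : algebraMap Spoly Lring (X 0) * IsLocalization.Away.invSelf (X 0 : Spoly) = 1 :=
    IsLocalization.Away.mul_invSelf (S := Lring) (X 0 : Spoly)
  simp only [Nat.factorial_zero, Nat.cast_one, inv_one, map_one, one_mul, pow_one, pow_zero,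
    mul_one, map_mul, map_pow, zero_add]
  linear_combination (algebraMap Spoly Lring (X 2) ^ 2) * hxv

lemma rond_genk (k : ℕ) : rondPhi K (X (Sum.inr 1) * X (Sum.inl k)
    - ((k : MvPolynomial (ℕ ⊕ Fin 3) K) + 1) * X (Sum.inr 0) * X (Sum.inl (k + 1))) = 0 := by
  simp only [rondPhi, map_sub, map_mul, map_pow, map_add, map_one, map_natCast,
    eval₂Hom_X', rondF]
  have hxv : algebraMap Spoly Lring (X 0) * IsLocalization.Away.invSelf (X 0 : Spoly) = 1 :=
    IsLocalization.Away.mul_invSelf (S := Lring) (X 0 : Spoly)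
  have hK : ((k : K) + 1) * ((Nat.factorial (k+1) : K)⁻¹) = (Nat.factorial k : K)⁻¹ := by
    have h1 : (Nat.factorial (k+1) : K) = ((k:K)+1) * (Nat.factorial k : K) := by
      rw [Nat.factorial_succ]; push_cast; ring
    have h2 : (Nat.factorial k : K) ≠ 0 := Nat.cast_ne_zero.2 (Nat.factorial_ne_zero k)
    have h3 : ((k:K) + 1) ≠ 0 := by
      have := Nat.cast_ne_zero (R := K) (n := k+1) |>.2 (Nat.succ_ne_zero k)
      push_cast at this; exact this
    field_simp [h1]
    exact h1.symm
  have hcast : ((k : Lring) + 1) = algebraMap Spoly Lring (C ((k : K) + 1)) := by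
    have e1 : (C ((k : K) + 1) : Spoly) = ((k : Spoly) + 1) := by
      rw [map_add, map_one, map_natCast (C : K →+* Spoly) k]
    rw [e1, map_add, map_one, map_natCast]
  have hC : algebraMap Spoly Lring (C ((k : K) + 1))
        * algebraMap Spoly Lring (C ((Nat.factorial (k+1) : K)⁻¹))
      = algebraMap Spoly Lring (C ((Nat.factorial k : K)⁻¹)) := by
    rw [← map_mul, ← map_mul, hK]
  rw [hcast, ← hC, pow_succ]
  linear_combination (-(algebraMap Spoly Lring (C ((k : K) + 1))
      * algebraMap Spoly Lring (C ((Nat.factorial (k+1) : K)⁻¹))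
      * algebraMap Spoly Lring (X 1) ^ (k+1) * algebraMap Spoly Lring (X 2) ^ 2
      * IsLocalization.Away.invSelf (X 0 : Spoly) ^ (k+1))) * hxv

lemma rond_span_le : rondIdeal K ≤ RingHom.ker (rondPhi K) := by
  rw [rondIdeal, Ideal.span_le]
  rintro p (rfl | ⟨k, rfl⟩)
  · exact rond_gen0 K
  · exact rond_genk K k

noncomputable def rondPhiBar : rondRing K →+* Lring :=
  Ideal.Quotient.lift (rondIdeal K) (rondPhi K) (fun a ha => rond_span_le K ha)

lemma rondPhiBar_mk (p : MvPolynomial (ℕ ⊕ Fin 3) K) :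
    rondPhiBar K (Ideal.Quotient.mk (rondIdeal K) p) = rondPhi K p := rfl

lemma rondPhiBar_x_isUnit : IsUnit (rondPhiBar K (rv K (Sum.inr 0))) := by
  rw [rv, rondPhiBar_mk]
  have h : rondPhi K (X (Sum.inr 0)) = algebraMap Spoly Lring (X 0) := by
    simp [rondPhi, rondF]
  rw [h]
  exact IsUnit.of_mul_eq_one _ (IsLocalization.Away.mul_invSelf (S := Lring) (X 0 : Spoly))

noncomputable def rondBig : Localization.Away (rv K (Sum.inr 0)) →+* Lring :=
  IsLocalization.Away.lift (S := Localization.Away (rv K (Sum.inr 0))) (rv K (Sum.inr 0))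
    (rondPhiBar_x_isUnit K)

lemma rondBig_alg (r : rondRing K) :
    rondBig K (algebraMap (rondRing K) (Localization.Away (rv K (Sum.inr 0))) r)
      = rondPhiBar K r :=
  IsLocalization.Away.lift_eq (rv K (Sum.inr 0)) (rondPhiBar_x_isUnit K) r

noncomputable def rondPsi : MvPolynomial (Fin 3) K →+* rondRing K :=
  (Ideal.Quotient.mk (rondIdeal K)).comp (rename Sum.inr).toRingHom

lemma rondPsi_x_isUnit :
    IsUnit ((algebraMap (rondRing K) (Localization.Away (rv K (Sum.inr 0)))).comp (rondPsi K)
      (X 0 : Spoly)) := by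
  have h : rondPsi K (X 0 : Spoly) = rv K (Sum.inr 0) := by simp [rondPsi, rv]
  simp only [RingHom.comp_apply, h]
  exact IsLocalization.Away.algebraMap_isUnit (S := Localization.Away (rv K (Sum.inr 0))) _

noncomputable def rondInv : Lring →+* Localization.Away (rv K (Sum.inr 0)) :=
  IsLocalization.Away.lift (S := Lring) (X 0 : Spoly) (rondPsi_x_isUnit K)

lemma rondInv_alg (s : Spoly) :
    rondInv K (algebraMap Spoly Lring s)
      = algebraMap (rondRing K) (Localization.Away (rv K (Sum.inr 0))) (rondPsi K s) :=
  IsLocalization.Away.lift_eq (X 0 : Spoly) (rondPsi_x_isUnit K) s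

lemma rond_phi_rename :
    (rondPhi K).comp (rename Sum.inr).toRingHom = algebraMap Spoly Lring := by
  apply MvPolynomial.ringHom_ext
  · intro c
    simp [rondPhi, MvPolynomial.algebraMap_eq]
  · intro i
    simp [rondPhi, rondF]

lemma rond_big_inv (s : Spoly) :
    rondBig K (rondInv K (algebraMap Spoly Lring s)) = algebraMap Spoly Lring s := by
  rw [rondInv_alg, rondBig_alg]
  have : rondPhiBar K (rondPsi K s) = (rondPhi K).comp (rename Sum.inr).toRingHom s := rfl
  rw [this, rond_phi_rename]

lemma rond_comp1 : (rondBig K).comp (rondInv K) = RingHom.id Lring := by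
  apply IsLocalization.ringHom_ext (S := Lring) (Submonoid.powers (X 0 : Spoly))
  refine RingHom.ext fun s => ?_
  simpa [RingHom.comp_apply] using rond_big_inv K s

lemma rond_w_formula (k : ℕ) (u : Localization.Away (rv K (Sum.inr 0)))
    (hu : algebraMap (rondRing K) (Localization.Away (rv K (Sum.inr 0))) (rv K (Sum.inr 0))
      * u = 1) :
    algebraMap (rondRing K) (Localization.Away (rv K (Sum.inr 0)))
        (Ideal.Quotient.mk (rondIdeal K) (C ((k.factorial : K)⁻¹)))
      * algebraMap (rondRing K) (Localization.Away (rv K (Sum.inr 0))) (rv K (Sum.inr 1)) ^ k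
      * algebraMap (rondRing K) (Localization.Away (rv K (Sum.inr 0))) (rv K (Sum.inr 2)) ^ 2
      * u ^ (k + 1)
    = algebraMap (rondRing K) (Localization.Away (rv K (Sum.inr 0))) (rv K (Sum.inl k)) := by
  set a := algebraMap (rondRing K) (Localization.Away (rv K (Sum.inr 0))) with ha
  have hkey := rond_key K k
  rw [← ha] at hkey
  have t0 := map_natCast a k.factorial
  have t1 : ((k.factorial : ℕ) : rondRing K)
      = Ideal.Quotient.mk (rondIdeal K) (C ((k.factorial : K))) := by
    rw [← map_natCast (Ideal.Quotient.mk (rondIdeal K)) k.factorial]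
    exact congrArg _ (map_natCast (C : K →+* MvPolynomial (ℕ ⊕ Fin 3) K) k.factorial).symm
  have hfne : ((k.factorial : ℕ) : K) ≠ 0 := Nat.cast_ne_zero.2 (Nat.factorial_ne_zero k)
  have hA : a (Ideal.Quotient.mk (rondIdeal K) (C ((k.factorial : K)⁻¹)))
      * ((k.factorial : ℕ) : Localization.Away (rv K (Sum.inr 0))) = 1 := by
    rw [← t0, t1, ← map_mul, ← map_mul, ← map_mul, inv_mul_cancel₀ hfne, map_one, map_one,
      map_one]
  have hxu : a (rv K (Sum.inr 0)) ^ (k + 1) * u ^ (k + 1) = 1 := by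
    rw [← mul_pow, hu, one_pow]
  calc a (Ideal.Quotient.mk (rondIdeal K) (C ((k.factorial : K)⁻¹)))
        * a (rv K (Sum.inr 1)) ^ k * a (rv K (Sum.inr 2)) ^ 2 * u ^ (k + 1)
      = a (Ideal.Quotient.mk (rondIdeal K) (C ((k.factorial : K)⁻¹)))
        * ((k.factorial : ℕ) * a (rv K (Sum.inr 0)) ^ (k + 1) * a (rv K (Sum.inl k)))
        * u ^ (k + 1) := by rw [hkey]; ring
    _ = (a (Ideal.Quotient.mk (rondIdeal K) (C ((k.factorial : K)⁻¹)))
          * ((k.factorial : ℕ) : Localization.Away (rv K (Sum.inr 0))))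
        * (a (rv K (Sum.inr 0)) ^ (k + 1) * u ^ (k + 1)) * a (rv K (Sum.inl k)) := by ring
    _ = a (rv K (Sum.inl k)) := by rw [hA, hxu, one_mul, one_mul]

lemma rond_comp2 :
    (rondInv K).comp (rondBig K) = RingHom.id (Localization.Away (rv K (Sum.inr 0))) := by
  refine IsLocalization.ringHom_ext (R := rondRing K)
    (S := Localization.Away (rv K (Sum.inr 0)))
    (P := Localization.Away (rv K (Sum.inr 0)))
    (Submonoid.powers (rv K (Sum.inr 0)))
    (j := (rondInv K).comp (rondBig K))
    (k := RingHom.id (Localization.Away (rv K (Sum.inr 0)))) ?_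
  apply Ideal.Quotient.ringHom_ext
  apply MvPolynomial.ringHom_ext
  · intro c
    simp only [RingHom.comp_apply]
    rw [show (Ideal.Quotient.mk (rondIdeal K)) (C c) = rondPsi K (C c) by simp [rondPsi]]
    rw [show (algebraMap (rondRing K) (Localization.Away (rv K (Sum.inr 0))))
        (rondPsi K (C c)) = rondInv K (algebraMap Spoly Lring (C c)) from (rondInv_alg K _).symm]
    rw [rond_big_inv]
    rfl
  · intro i
    cases i with
    | inl k =>
        simp only [RingHom.comp_apply]
        rw [show (Ideal.Quotient.mk (rondIdeal K)) (X (Sum.inl k)) = rv K (Sum.inl k) from rfl]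
        rw [rondBig_alg]
        have hphi : rondPhiBar K (rv K (Sum.inl k))
            = algebraMap Spoly Lring (C ((k.factorial : K)⁻¹) * X 1 ^ k * X 2 ^ 2)
              * (IsLocalization.Away.invSelf (X 0 : Spoly)) ^ (k + 1) := by
          rw [rv, rondPhiBar_mk]
          simp [rondPhi, rondF]
        rw [hphi, map_mul, map_pow, rondInv_alg]
        have hpsi : rondPsi K (C ((k.factorial : K)⁻¹) * X 1 ^ k * X 2 ^ 2)
            = Ideal.Quotient.mk (rondIdeal K) (C ((k.factorial : K)⁻¹))
              * rv K (Sum.inr 1) ^ k * rv K (Sum.inr 2) ^ 2 := by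
          simp [rondPsi, rv, map_mul, map_pow]
        rw [hpsi]
        have hu : algebraMap (rondRing K) (Localization.Away (rv K (Sum.inr 0)))
            (rv K (Sum.inr 0)) * rondInv K (IsLocalization.Away.invSelf (X 0 : Spoly)) = 1 := by
          have hxv := IsLocalization.Away.mul_invSelf (S := Lring) (X 0 : Spoly)
          have := congrArg (rondInv K) hxv
          rw [map_mul, map_one, rondInv_alg] at this
          rw [show rondPsi K (X 0 : Spoly) = rv K (Sum.inr 0) by simp [rondPsi, rv]] at this
          exact this
        rw [map_mul, map_mul, map_pow, map_pow]
        rw [rond_w_formula K k _ hu]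
        rfl
    | inr i =>
        simp only [RingHom.comp_apply]
        rw [show (Ideal.Quotient.mk (rondIdeal K)) (X (Sum.inr i)) = rondPsi K (X i) by
          simp [rondPsi]]
        rw [show (algebraMap (rondRing K) (Localization.Away (rv K (Sum.inr 0))))
            (rondPsi K (X i)) = rondInv K (algebraMap Spoly Lring (X i)) from
          (rondInv_alg K _).symm]
        rw [rond_big_inv]
        rfl

end Main

set_option synthInstance.maxHeartbeats 1000000 in
/-- In R[1/x] one has k!·x^{k+1}·w_k = y^k·z² (i.e.
w_k = (1/k!)·y^k·z²·x^{−(k+1)}) for every k, and R[1/x] ≅ K[x,y,z][1/x]. -/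
theorem stmt_9 (K : Type*) [RCLike K] :
    (∀ k : ℕ,
      (k.factorial : Localization.Away (rv K (Sum.inr 0)))
          * algebraMap (rondRing K) (Localization.Away (rv K (Sum.inr 0)))
              (rv K (Sum.inr 0)) ^ (k + 1)
          * algebraMap (rondRing K) (Localization.Away (rv K (Sum.inr 0)))
              (rv K (Sum.inl k))
        = algebraMap (rondRing K) (Localization.Away (rv K (Sum.inr 0)))
              (rv K (Sum.inr 1)) ^ k
          * algebraMap (rondRing K) (Localization.Away (rv K (Sum.inr 0)))
              (rv K (Sum.inr 2)) ^ 2)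
    ∧ Nonempty
        (Localization.Away (rv K (Sum.inr 0)) ≃+*
          Localization.Away (X 0 : MvPolynomial (Fin 3) K)) := by
  exact ⟨fun k => rond_key K k,
    ⟨RingEquiv.ofRingHom (rondBig K) (rondInv K) (rond_comp1 K) (rond_comp2 K)⟩⟩
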